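/- arXiv:2107.14276 — 4 statements merged into one kernel-verified Lean document; each statement's English description precedes it below -/
import Mathlib

section
/- Let (R,M) be a discrete valuation domain with finite residue field and let S ⊆ R be a finite nonempty subset. Then there exists a uniquely determined finite partition C_S = {s + M^{n_s} : s ∈ S} of R into residue classes of powers of M, each block containing an element of S, such that every block s+M^{n_s} contains both a residue class of M^{n_s+1} intersecting S and a residue class of M^{n_s+1} disjoint from S. As a consequence, S contains a balanced subset S' with C_{S'} = C_S. -/
open Polynomial

section Defs

variable (R K : Type*)

/-- `Int(R) = {F ∈ K[x] ∣ F(R) ⊆ R}`, the ring of integer-valued polynomials,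
as a subring of `K[x]`. -/
def intPoly [CommRing R] [CommRing K] [Algebra R K] : Subring (Polynomial K) where
  carrier := {F | ∀ r : R, ∃ a : R, F.eval (algebraMap R K r) = algebraMap R K a}
  mul_mem' := by
    rintro f g hf hg r
    obtain ⟨a, ha⟩ := hf r
    obtain ⟨b, hb⟩ := hg r
    exact ⟨a * b, by simp [ha, hb]⟩
  one_mem' := fun r => ⟨1, by simp⟩
  add_mem' := by
    rintro f g hf hg r
    obtain ⟨a, ha⟩ := hf r
    obtain ⟨b, hb⟩ := hg r
    exact ⟨a + b, by simp [ha, hb]⟩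
  zero_mem' := fun r => ⟨0, by simp⟩
  neg_mem' := by
    rintro f hf r
    obtain ⟨a, ha⟩ := hf r
    exact ⟨-a, by simp [ha]⟩

/-- Polynomials with coefficients in `R` are integer-valued. -/
theorem map_mem_intPoly [CommRing R] [CommRing K] [Algebra R K] (f : Polynomial R) :
    f.map (algebraMap R K) ∈ intPoly R K :=
  fun r => ⟨f.eval r, by rw [Polynomial.eval_map, Polynomial.eval₂_at_apply]⟩

/-- An element `d` of a commutative monoid is absolutely irreducible if it is irreducible
and, for every `n ≥ 1`, the only factorization of `d ^ n` into irreducibles is, up to order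
and unit factors, `d ⋯ d` (`n` copies). -/
def AbsolutelyIrreducible {α : Type*} [CommMonoid α] (d : α) : Prop :=
  Irreducible d ∧ ∀ n : ℕ, 1 ≤ n → ∀ l : Multiset α, (∀ a ∈ l, Irreducible a) →
    l.prod = d ^ n → Multiset.card l = n ∧ ∀ a ∈ l, Associated a d

/-- The fixed divisor of a polynomial `f ∈ R[x]`: the ideal of `R` generated by the
values of `f` on `R`. -/
def fixDiv [CommRing R] (f : Polynomial R) : Ideal R :=
  Ideal.span (Set.range fun a => f.eval a)

/-- The fixed divisor of an integer-valued polynomial `F ∈ Int(R)`: the ideal of `R`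
generated by (the elements of `R` representing) the values of `F` on `R`. -/
def fixDivK [CommRing R] [CommRing K] [Algebra R K] (F : Polynomial K) : Ideal R :=
  Ideal.span {a : R | ∃ r : R, F.eval (algebraMap R K r) = algebraMap R K a}

/-- The (normalized additive) valuation of a nonzero element of a discrete valuation
ring: the largest `n` such that `x ∈ M ^ n`, where `M` is the maximal ideal. -/
noncomputable def mval [CommRing R] [IsLocalRing R] (x : R) : ℕ :=
  sSup {n : ℕ | x ∈ IsLocalRing.maximalIdeal R ^ n}

open scoped Classical in
/-- The valuation `v : R → ℕ∞`, with `v 0 = ⊤`. -/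
noncomputable def vR [CommRing R] [IsLocalRing R] (x : R) : ℕ∞ :=
  if x = 0 then ⊤ else (mval R x : ℕ∞)

open scoped Classical in
/-- The valuation extended to the quotient field `K`, with `v 0 = ⊤`. -/
noncomputable def vK [CommRing R] [IsLocalRing R] [CommRing K] [Algebra R K]
    [IsLocalization (nonZeroDivisors R) K] (x : K) : WithTop ℤ :=
  if x = 0 then ⊤
  else (((mval R (IsLocalization.sec (nonZeroDivisors R) x).1 : ℤ) -
        (mval R ((IsLocalization.sec (nonZeroDivisors R) x).2 : R) : ℤ) : ℤ) : WithTop ℤ)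

/-- The residue class `s + M ^ n` of `s` modulo the `n`-th power of the maximal ideal. -/
def resClass [CommRing R] [IsLocalRing R] (s : R) (n : ℕ) : Set R :=
  {x | x - s ∈ IsLocalRing.maximalIdeal R ^ n}

/-- A finite set `S ⊆ R` is balanced if, letting `n s` for each `s ∈ S` be the minimal
non-negative integer with `(s + M ^ (n s)) ∩ S = {s}`, the residue classes `s + M ^ (n s)`
(`s ∈ S`) are pairwise disjoint and cover `R`. -/
def IsBalanced [CommRing R] [IsLocalRing R] (S : Finset R) : Prop :=
  S.Nonempty ∧
  ∃ n : R → ℕ,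
    (∀ s ∈ S, resClass R s (n s) ∩ (S : Set R) = {s} ∧
      ∀ k : ℕ, resClass R s k ∩ (S : Set R) = {s} → n s ≤ k) ∧
    (∀ s ∈ S, ∀ t ∈ S, s ≠ t → Disjoint (resClass R s (n s)) (resClass R t (n t))) ∧
    (⋃ s ∈ S, resClass R s (n s)) = Set.univ

/-- `ρ` describes the `M`-adic partition `C_S` associated to `S`: the partition of `R`
into the residue classes `s + M ^ (ρ s)`, `s ∈ S`, such that each block contains both a
residue class of `M ^ (ρ s + 1)` intersecting `S` and one disjoint from `S`. -/
def IsSPartition [CommRing R] [IsLocalRing R] (S : Finset R) (ρ : R → ℕ) : Prop :=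
  (⋃ s ∈ S, resClass R s (ρ s)) = Set.univ ∧
  (∀ s ∈ S, ∀ t ∈ S,
    resClass R s (ρ s) = resClass R t (ρ t) ∨
      Disjoint (resClass R s (ρ s)) (resClass R t (ρ t))) ∧
  (∀ s ∈ S,
    (∃ u : R, resClass R u (ρ s + 1) ⊆ resClass R s (ρ s) ∧
      (resClass R u (ρ s + 1) ∩ (S : Set R)).Nonempty) ∧
    (∃ u : R, resClass R u (ρ s + 1) ⊆ resClass R s (ρ s) ∧
      resClass R u (ρ s + 1) ∩ (S : Set R) = ∅))

/-- `S'` is a balanced set associated to `S` (relative to the partition data `ρ` of `C_S`):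
`S' ⊆ S` is balanced, consists of one representative per block of `C_S`, and its associated
partition `C_{S'}` coincides with `C_S`. -/
def IsAssociatedBalancedSubset [CommRing R] [IsLocalRing R] (S S' : Finset R) (ρ : R → ℕ) :
    Prop :=
  S' ⊆ S ∧ IsBalanced R S' ∧
  (∀ s ∈ S', ∀ t ∈ S', s ≠ t → Disjoint (resClass R s (ρ s)) (resClass R t (ρ t))) ∧
  (⋃ s ∈ S', resClass R s (ρ s)) = Set.univ

open scoped Classical in
/-- The partition matrix of the partition `{s + M ^ (ρ s) : s ∈ S}`: diagonal entries
`ρ s`, off-diagonal entries `v (s - t)`. -/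
noncomputable def partitionMatrix [CommRing R] [IsLocalRing R] (S : Finset R) (ρ : R → ℕ) :
    Matrix {x // x ∈ S} {x // x ∈ S} ℤ :=
  Matrix.of fun s t =>
    if (s : R) = (t : R) then (ρ (s : R) : ℤ) else (mval R ((s : R) - (t : R)) : ℤ)

/-- `m` is the vector of multiplicities of the equalizing polynomial of `S`: the unique
vector of positive integers with gcd `1` such that `A · m = e · (1, …, 1)ᵀ` for some
non-negative integer `e`, where `A` is the partition matrix. -/
def IsEqualizingVector [CommRing R] [IsLocalRing R] (S : Finset R) (ρ : R → ℕ) (m : R → ℕ) :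
    Prop :=
  (∀ s ∈ S, 0 < m s) ∧ S.gcd m = 1 ∧
  ∃ e : ℕ, ∀ s : {x // x ∈ S},
    (∑ t : {x // x ∈ S}, partitionMatrix R S ρ s t * (m (t : R) : ℤ)) = (e : ℤ)

/-- `f` is the equalizing polynomial of `S`. -/
def IsEqualizingPoly [CommRing R] [IsLocalRing R] (S : Finset R) (f : Polynomial R) : Prop :=
  ∃ (ρ : R → ℕ) (m : R → ℕ), IsSPartition R S ρ ∧ IsEqualizingVector R S ρ m ∧
    f = ∏ s ∈ S, (Polynomial.X - Polynomial.C s) ^ m s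

/-- The posh set of `f ∈ R[x]`: the set of `r ∈ R` where `v (f r)` exceeds
`min_{t ∈ R} v (f t)`. -/
noncomputable def poshR [CommRing R] [IsLocalRing R] (f : Polynomial R) : Set R :=
  {r : R | (⨅ t : R, vR R (f.eval t)) < vR R (f.eval r)}

/-- The posh set of `F ∈ K[x]`: the set of `r ∈ R` where `v (F r)` exceeds
`min_{t ∈ R} v (F t)`. -/
def poshK [CommRing R] [IsLocalRing R] [CommRing K] [Algebra R K]
    [IsLocalization (nonZeroDivisors R) K] (F : Polynomial K) : Set R :=
  {r : R | ∃ t : R, vK R K (F.eval (algebraMap R K t)) < vK R K (F.eval (algebraMap R K r))}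

/-- `r` lies in an `S`-poor neighborhood of the partition `C_S` (described by `ρ`):
a residue class `r + M ^ (ρ s + 1)` disjoint from `S` inside a block `s + M ^ (ρ s)`. -/
def IsPoorElt [CommRing R] [IsLocalRing R] (S : Finset R) (ρ : R → ℕ) (r : R) : Prop :=
  ∃ s ∈ S, r ∈ resClass R s (ρ s) ∧ resClass R r (ρ s + 1) ∩ (S : Set R) = ∅

/-- The rich set of `S`: the union of the `S`-rich neighborhoods `s + M ^ (ρ s + 1)`,
`s ∈ S`. -/
def richSet [CommRing R] [IsLocalRing R] (S : Finset R) (ρ : R → ℕ) : Set R :=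
  ⋃ s ∈ S, resClass R s (ρ s + 1)

/-- `a` is an `M`-ordering (`P`-ordering) of `R`. -/
def IsMOrdering [CommRing R] [IsLocalRing R] (a : ℕ → R) : Prop :=
  ∀ k : ℕ, ∀ x : R,
    vR R (∏ i ∈ Finset.range k, (a k - a i)) ≤ vR R (∏ i ∈ Finset.range k, (x - a i))

end Defs

set_option linter.unusedSectionVars false

namespace St11

variable {R : Type*} [CommRing R] [IsLocalRing R]

theorem mem_resClass_iff {s x : R} {n : ℕ} :
    x ∈ resClass R s n ↔ x - s ∈ IsLocalRing.maximalIdeal R ^ n := Iff.rfl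

theorem mem_resClass_self (s : R) (n : ℕ) : s ∈ resClass R s n := by
  simp [mem_resClass_iff]

theorem resClass_mono {s : R} {m n : ℕ} (h : m ≤ n) : resClass R s n ⊆ resClass R s m :=
  fun _ hx => Ideal.pow_le_pow_right h hx

theorem resClass_eq_of_mem {s x : R} {n : ℕ} (h : x ∈ resClass R s n) :
    resClass R x n = resClass R s n := by
  ext y
  constructor <;> intro hy
  · have hys : y - s = (y - x) + (x - s) := by ring
    rw [mem_resClass_iff, hys]; exact add_mem hy h
  · have hyx : y - x = (y - s) - (x - s) := by ring
    rw [mem_resClass_iff, hyx]; exact sub_mem hy h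

/-- every child of the class of `x` at level `n` meets `S`. -/
def AllKids (S : Finset R) (x : R) (n : ℕ) : Prop :=
  ∀ y ∈ resClass R x n, (resClass R y (n + 1) ∩ (S : Set R)).Nonempty

theorem allKids_congr {S : Finset R} {x y : R} {m n : ℕ} (hy : y ∈ resClass R x n)
    (hmn : m ≤ n) : AllKids S y m ↔ AllKids S x m := by
  unfold AllKids
  rw [resClass_eq_of_mem (resClass_mono hmn hy)]

variable [IsDomain R] [IsDiscreteValuationRing R]

theorem pow_not_mem_pow_succ {ϖ : R} (hϖ : Irreducible ϖ) (k : ℕ) :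
    ϖ ^ k ∉ IsLocalRing.maximalIdeal R ^ (k + 1) := by
  rw [hϖ.maximalIdeal_eq, Ideal.span_singleton_pow, Ideal.mem_span_singleton]
  rintro ⟨c, hc⟩
  have h0 : ϖ ^ k ≠ 0 := pow_ne_zero _ hϖ.ne_zero
  have hmul : ϖ ^ k * 1 = ϖ ^ k * (ϖ * c) := by
    rw [mul_one]; conv_lhs => rw [hc]
    ring
  exact hϖ.not_isUnit (IsUnit.of_mul_eq_one _ (mul_left_cancel₀ h0 hmul).symm)

theorem mem_maximalIdeal_of_irreducible {ϖ : R} (hϖ : Irreducible ϖ) :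
    ϖ ∈ IsLocalRing.maximalIdeal R := by
  rw [hϖ.maximalIdeal_eq]; exact Ideal.mem_span_singleton_self ϖ

theorem exists_not_mem_pow {x : R} (hx : x ≠ 0) {ϖ : R} (hϖ : Irreducible ϖ) :
    ∃ n : ℕ, ∀ m, n < m → x ∉ IsLocalRing.maximalIdeal R ^ m := by
  obtain ⟨n, u, hu⟩ := IsDiscreteValuationRing.eq_unit_mul_pow_irreducible hx hϖ
  refine ⟨n, fun m hm hmem => ?_⟩
  have h1 : ϖ ^ n ∈ IsLocalRing.maximalIdeal R ^ m := by
    have : ((u⁻¹ : Rˣ) : R) * x ∈ IsLocalRing.maximalIdeal R ^ m := Ideal.mul_mem_left _ _ hmem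
    rwa [hu, ← mul_assoc, Units.inv_mul, one_mul] at this
  exact pow_not_mem_pow_succ hϖ n
    (Ideal.pow_le_pow_right (by omega : n + 1 ≤ m) h1)

theorem resClass_level_inj {s t : R} {a b : ℕ} (h : resClass R s a = resClass R t b) :
    a = b := by
  obtain ⟨ϖ, hϖ⟩ := IsDiscreteValuationRing.exists_irreducible R
  have hst : resClass R s a = resClass R s b := by
    rw [h, resClass_eq_of_mem (show s ∈ resClass R t b from h ▸ mem_resClass_self s a)]
  have hMM : ∀ w : R, w ∈ IsLocalRing.maximalIdeal R ^ a ↔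
      w ∈ IsLocalRing.maximalIdeal R ^ b := fun w => by
    have hw := Set.ext_iff.mp hst (w + s)
    simpa [mem_resClass_iff] using hw
  by_contra hab
  rcases Nat.lt_or_ge a b with hlt | hge
  · exact pow_not_mem_pow_succ hϖ a (Ideal.pow_le_pow_right hlt
      ((hMM _).mp (Ideal.pow_mem_pow (mem_maximalIdeal_of_irreducible hϖ) a)))
  · have hlt : b < a := lt_of_le_of_ne hge (fun hba => hab hba.symm)
    exact pow_not_mem_pow_succ hϖ b (Ideal.pow_le_pow_right hlt
      ((hMM _).mpr (Ideal.pow_mem_pow (mem_maximalIdeal_of_irreducible hϖ) b)))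

theorem exists_not_allKids (S : Finset R) (x : R) : ∃ n, ¬ AllKids S x n := by
  classical
  obtain ⟨ϖ, hϖ⟩ := IsDiscreteValuationRing.exists_irreducible R
  -- a separation bound
  have hsep : ∃ N : ℕ, ∀ s ∈ S, ∀ t ∈ S, s ≠ t →
      s - t ∉ IsLocalRing.maximalIdeal R ^ N := by
    set f : R → R → ℕ := fun s t =>
      if h : s - t ≠ 0 then (exists_not_mem_pow h hϖ).choose else 0 with hf
    refine ⟨(S.sup fun s => S.sup fun t => f s t) + 1, fun s hs t ht hst => ?_⟩
    have hne : s - t ≠ 0 := sub_ne_zero.mpr hst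
    have hle : f s t ≤ S.sup fun s => S.sup fun t => f s t :=
      le_trans (Finset.le_sup (f := f s) ht) (Finset.le_sup (f := fun s => S.sup fun t => f s t) hs)
    have hspec := (exists_not_mem_pow hne hϖ).choose_spec
    have : f s t = (exists_not_mem_pow hne hϖ).choose := by rw [hf]; simp [hne]
    exact hspec _ (by omega)
  obtain ⟨N, hN⟩ := hsep
  refine ⟨N, fun hAll => ?_⟩
  by_cases hc : ((resClass R x N) ∩ (S : Set R)).Nonempty
  · obtain ⟨s, hs1, hs2⟩ := hc
    set y := s + ϖ ^ N with hy
    have hyk : y - s ∈ IsLocalRing.maximalIdeal R ^ N := by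
      rw [hy, add_sub_cancel_left]
      exact Ideal.pow_mem_pow (mem_maximalIdeal_of_irreducible hϖ) N
    have hyx : y ∈ resClass R x N := by
      have : y ∈ resClass R s N := hyk
      rwa [resClass_eq_of_mem hs1] at this
    obtain ⟨t, ht1, ht2⟩ := hAll y hyx
    have htx : t ∈ resClass R x N := by
      have := resClass_mono (Nat.le_succ N) ht1
      rwa [resClass_eq_of_mem hyx] at this
    have hts : t = s := by
      by_contra hne
      have : t - s ∈ IsLocalRing.maximalIdeal R ^ N := by
        have h1 : t - s = (t - x) - (s - x) := by ring
        rw [h1]; exact sub_mem htx hs1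
      exact hN t ht2 s hs2 hne this
    have hsy : s - y ∈ IsLocalRing.maximalIdeal R ^ (N + 1) := hts ▸ ht1
    have : ϖ ^ N ∈ IsLocalRing.maximalIdeal R ^ (N + 1) := by
      have := neg_mem hsy
      rwa [show -(s - y) = ϖ ^ N by rw [hy]; ring] at this
    exact pow_not_mem_pow_succ hϖ N this
  · obtain ⟨t, ht1, ht2⟩ := hAll x (mem_resClass_self x N)
    exact hc ⟨t, resClass_mono (Nat.le_succ N) ht1, ht2⟩

/-- the level of the block of `x` in the canonical `S`-partition. -/
noncomputable def nuS (S : Finset R) (x : R) : ℕ := sInf {n | ¬ AllKids S x n}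

theorem not_allKids_nu (S : Finset R) (x : R) : ¬ AllKids S x (nuS S x) :=
  Nat.sInf_mem (exists_not_allKids S x)

theorem allKids_of_lt_nu {S : Finset R} {x : R} {m : ℕ} (h : m < nuS S x) :
    AllKids S x m := by
  by_contra hn
  have h2 : nuS S x ≤ m := Nat.sInf_le (show m ∈ {n | ¬ AllKids S x n} from hn)
  omega

theorem nu_eq_of_mem {S : Finset R} {x y : R} (h : y ∈ resClass R x (nuS S x)) :
    nuS S y = nuS S x := by
  have hle : nuS S y ≤ nuS S x :=
    Nat.sInf_le (show ¬ AllKids S y (nuS S x) from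
      fun hk => not_allKids_nu S x ((allKids_congr h le_rfl).mp hk))
  have hge : ¬ nuS S y < nuS S x := fun hlt =>
    not_allKids_nu S y ((allKids_congr h (le_of_lt hlt)).mpr (allKids_of_lt_nu hlt))
  omega

theorem block_eq_of_mem {S : Finset R} {x y : R} (h : y ∈ resClass R x (nuS S x)) :
    resClass R y (nuS S y) = resClass R x (nuS S x) := by
  rw [nu_eq_of_mem h]; exact resClass_eq_of_mem h

theorem block_inter_nonempty (S : Finset R) (hS : S.Nonempty) (x : R) :
    (resClass R x (nuS S x) ∩ (S : Set R)).Nonempty := by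
  rcases Nat.eq_zero_or_pos (nuS S x) with h0 | hpos
  · obtain ⟨s, hs⟩ := hS
    exact ⟨s, by rw [h0]; simp [mem_resClass_iff], hs⟩
  · have hall := allKids_of_lt_nu (show nuS S x - 1 < nuS S x by omega)
    have hx := hall x (mem_resClass_self x _)
    rwa [Nat.sub_add_cancel hpos] at hx

theorem isSPartition_nu (S : Finset R) (hS : S.Nonempty) : IsSPartition R S (nuS S) := by
  refine ⟨?_, ?_, ?_⟩
  · ext x
    simp only [Set.mem_iUnion, Set.mem_univ, iff_true]
    obtain ⟨s, hs1, hs2⟩ := block_inter_nonempty S hS x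
    refine ⟨s, hs2, ?_⟩
    rw [block_eq_of_mem hs1]
    exact mem_resClass_self x _
  · intro s _ t _
    by_cases hd : Disjoint (resClass R s (nuS S s)) (resClass R t (nuS S t))
    · exact Or.inr hd
    · obtain ⟨x, hxs, hxt⟩ := Set.not_disjoint_iff.mp hd
      exact Or.inl (by rw [← block_eq_of_mem hxs, ← block_eq_of_mem hxt])
  · intro s _
    constructor
    · exact ⟨s, resClass_mono (Nat.le_succ _), ⟨s, mem_resClass_self _ _,
        Finset.mem_coe.mpr ‹s ∈ S›⟩⟩
    · have h1 := not_allKids_nu S s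
      unfold AllKids at h1
      push_neg at h1
      obtain ⟨y, hy1, hy2⟩ := h1
      refine ⟨y, ?_, hy2⟩
      intro z hz
      rw [← resClass_eq_of_mem hy1]
      exact resClass_mono (Nat.le_succ _) hz

theorem isSPartition_eq_nu {S : Finset R} {ρ : R → ℕ} (hρ : IsSPartition R S ρ) :
    ∀ s ∈ S, ρ s = nuS S s := by
  obtain ⟨hcov, hdisj, hblocks⟩ := hρ
  intro s hs
  have hub : nuS S s ≤ ρ s := by
    obtain ⟨-, ⟨u, hu1, hu2⟩⟩ := hblocks s hs
    refine Nat.sInf_le (show ¬ AllKids S s (ρ s) from fun hAll => ?_)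
    obtain ⟨t, ht1, ht2⟩ := hAll u (hu1 (mem_resClass_self u _))
    exact Set.eq_empty_iff_forall_notMem.mp hu2 t ⟨ht1, ht2⟩
  have hall : ∀ m < ρ s, AllKids S s m := by
    intro m hm y hy
    have hyc : y ∈ ⋃ t ∈ S, resClass R t (ρ t) := by rw [hcov]; trivial
    simp only [Set.mem_iUnion] at hyc
    obtain ⟨t, ht, hyt⟩ := hyc
    rcases le_or_gt (m + 1) (ρ t) with hle | hlt
    · refine ⟨t, ?_, ht⟩
      have h1 : t ∈ resClass R y (ρ t) := by
        rw [resClass_eq_of_mem hyt]; exact mem_resClass_self t _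
      exact resClass_mono hle h1
    · exfalso
      have hst : s ∈ resClass R t (ρ t) := by
        rw [← resClass_eq_of_mem hyt]
        have h2 : s ∈ resClass R y m := by
          rw [resClass_eq_of_mem hy]; exact mem_resClass_self s _
        exact resClass_mono (by omega : ρ t ≤ m) h2
      rcases hdisj s hs t ht with heq | hd
      · have := resClass_level_inj heq
        omega
      · exact Set.disjoint_left.mp hd (mem_resClass_self s _) hst
  rcases lt_trichotomy (ρ s) (nuS S s) with h | h | h
  · exact absurd hub (by omega)
  · exact h
  · exact absurd (not_allKids_nu S s) (not_not_intro (hall _ h))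

theorem nonempty_choose_congr {α : Type*} {A B : Set α} (h : A = B)
    (hA : A.Nonempty) (hB : B.Nonempty) : hA.choose = hB.choose := by
  subst h; rfl

/-- the chosen representative of the block of `x`. -/
noncomputable def repF (S : Finset R) (hS : S.Nonempty) (x : R) : R :=
  (block_inter_nonempty S hS x).choose

theorem repF_mem (S : Finset R) (hS : S.Nonempty) (x : R) :
    repF S hS x ∈ resClass R x (nuS S x) ∩ (S : Set R) :=
  (block_inter_nonempty S hS x).choose_spec

theorem repF_congr {S : Finset R} (hS : S.Nonempty) {x y : R}
    (h : resClass R x (nuS S x) = resClass R y (nuS S y)) :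
    repF S hS x = repF S hS y :=
  nonempty_choose_congr (by rw [h]) _ _

theorem block_repF (S : Finset R) (hS : S.Nonempty) (x : R) :
    resClass R (repF S hS x) (nuS S (repF S hS x)) = resClass R x (nuS S x) :=
  block_eq_of_mem (repF_mem S hS x).1

theorem repF_idem (S : Finset R) (hS : S.Nonempty) (x : R) :
    repF S hS (repF S hS x) = repF S hS x :=
  repF_congr hS (block_repF S hS x)

end St11

/-- For every finite nonempty `S ⊆ R` there is a uniquely determined
`M`-adic partition `C_S = {s + M^{ρ s} : s ∈ S}` of `R` such that each block contains both
a residue class of the next power of `M` intersecting `S` and one disjoint from `S`;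
consequently `S` contains a balanced subset `S'` with `C_{S'} = C_S`. -/
theorem statement11 (R : Type*) [CommRing R] [IsDomain R] [IsDiscreteValuationRing R]
    [Finite (IsLocalRing.ResidueField R)]
    (S : Finset R) (hSne : S.Nonempty) :
    (∃ ρ : R → ℕ, IsSPartition R S ρ) ∧
    (∀ ρ ρ' : R → ℕ, IsSPartition R S ρ → IsSPartition R S ρ' → ∀ s ∈ S, ρ s = ρ' s) ∧
    (∀ ρ : R → ℕ, IsSPartition R S ρ →
      ∃ S' : Finset R, IsAssociatedBalancedSubset R S S' ρ) := by
  classical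
  refine ⟨⟨St11.nuS S, St11.isSPartition_nu S hSne⟩, ?_, ?_⟩
  · intro ρ ρ' h h' s hs
    rw [St11.isSPartition_eq_nu h s hs, St11.isSPartition_eq_nu h' s hs]
  · intro ρ hρ
    obtain ⟨ϖ, hϖ⟩ := IsDiscreteValuationRing.exists_irreducible R
    have hρν : ∀ s ∈ S, ρ s = St11.nuS S s := St11.isSPartition_eq_nu hρ
    set rep := St11.repF S hSne with hrep
    set S' : Finset R := S.image rep with hS'
    have hrepS : ∀ x, rep x ∈ S := fun x => (St11.repF_mem S hSne x).2
    have hrepB : ∀ x, x ∈ resClass R (rep x) (St11.nuS S (rep x)) := fun x => by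
      rw [hrep, St11.block_repF S hSne x]; exact St11.mem_resClass_self x _
    have hmemS' : ∀ x, rep x ∈ S' := fun x => by
      rw [hS']; exact Finset.mem_image.mpr ⟨rep x, hrepS x, St11.repF_idem S hSne x⟩
    have hfix : ∀ t ∈ S', rep t = t := by
      intro t ht
      rw [hS', Finset.mem_image] at ht
      obtain ⟨a, _, rfl⟩ := ht
      exact St11.repF_idem S hSne a
    have hS'sub : S' ⊆ S := by
      intro t ht; rw [← hfix t ht]; exact hrepS t
    have hsingle : ∀ s ∈ S', resClass R s (St11.nuS S s) ∩ (S' : Set R) = {s} := by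
      intro s hs
      ext t
      simp only [Set.mem_inter_iff, Set.mem_singleton_iff]
      constructor
      · rintro ⟨ht1, ht2⟩
        have hb : resClass R t (St11.nuS S t) = resClass R s (St11.nuS S s) :=
          St11.block_eq_of_mem ht1
        rw [← hfix t ht2, ← hfix s hs]
        exact St11.repF_congr hSne hb
      · rintro rfl
        exact ⟨St11.mem_resClass_self _ _, hs⟩
    have hmin : ∀ s ∈ S', ∀ k : ℕ,
        resClass R s k ∩ (S' : Set R) = {s} → St11.nuS S s ≤ k := by
      intro s _ k hk
      by_contra hlt
      push_neg at hlt
      set y := s + ϖ ^ k with hy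
      have hys : y ∈ resClass R s k := by
        rw [St11.mem_resClass_iff, hy, add_sub_cancel_left]
        exact Ideal.pow_mem_pow (St11.mem_maximalIdeal_of_irreducible hϖ) k
      have hnuy : k < St11.nuS S y := by
        by_contra hle
        push_neg at hle
        exact St11.not_allKids_nu S y ((St11.allKids_congr hys hle).mpr
          (St11.allKids_of_lt_nu (by omega)))
      have ht1 : rep y ∈ resClass R y (k + 1) :=
        St11.resClass_mono hnuy ((St11.repF_mem S hSne y).1)
      have htk : rep y ∈ resClass R s k := by
        rw [St11.mem_resClass_iff]
        have he : rep y - s = (rep y - y) + ϖ ^ k := by rw [hy]; ring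
        rw [he]
        exact add_mem (Ideal.pow_le_pow_right (by omega : k ≤ k + 1) ht1)
          (Ideal.pow_mem_pow (St11.mem_maximalIdeal_of_irreducible hϖ) k)
      have hts : rep y = s := (Set.ext_iff.mp hk (rep y)).mp ⟨htk, hmemS' y⟩
      have hcon : ϖ ^ k ∈ IsLocalRing.maximalIdeal R ^ (k + 1) := by
        have h2 : s - y ∈ IsLocalRing.maximalIdeal R ^ (k + 1) := hts ▸ ht1
        have h3 := neg_mem h2
        rwa [show -(s - y) = ϖ ^ k by rw [hy]; ring] at h3
      exact St11.pow_not_mem_pow_succ hϖ k hcon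
    have hdisj : ∀ s ∈ S', ∀ t ∈ S', s ≠ t →
        Disjoint (resClass R s (St11.nuS S s)) (resClass R t (St11.nuS S t)) := by
      intro s hs t ht hst
      rw [Set.disjoint_left]
      intro x hxs hxt
      apply hst
      have h1 : t ∈ resClass R s (St11.nuS S s) := by
        rw [← St11.block_eq_of_mem hxs, St11.block_eq_of_mem hxt]
        exact St11.mem_resClass_self t _
      exact ((Set.ext_iff.mp (hsingle s hs) t).mp ⟨h1, ht⟩).symm
    have hcov : (⋃ s ∈ S', resClass R s (St11.nuS S s)) = Set.univ := by
      ext x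
      simp only [Set.mem_iUnion, Set.mem_univ, iff_true]
      exact ⟨rep x, hmemS' x, hrepB x⟩
    have hρν' : ∀ s ∈ S', ρ s = St11.nuS S s := fun s hs => hρν s (hS'sub hs)
    refine ⟨S', hS'sub, ?_, ?_, ?_⟩
    · exact ⟨hSne.image rep, St11.nuS S, fun s hs => ⟨hsingle s hs, hmin s hs⟩, hdisj, hcov⟩
    · intro s hs t ht hst
      rw [hρν' s hs, hρν' t ht]
      exact hdisj s hs t ht hst
    · ext x
      simp only [Set.mem_iUnion, Set.mem_univ, iff_true]
      exact ⟨rep x, hmemS' x, by rw [hρν' (rep x) (hmemS' x)]; exact hrepB x⟩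
end

section
/- Let (R,M) be a discrete valuation domain with finite residue field and valuation v, let S ⊆ R be a finite nonempty set, and let f = ∏_{s∈S}(x−s)^{h_s} with positive integers h_s. Let S' ⊆ S be a balanced set associated to S, let A be the partition matrix of C_S indexed by S', for t ∈ S' put m_t = Σ_{s ∈ S_t} h_s, and let d_f be a generator of the fixed divisor of f. Then the following are equivalent: (i) Posh(f) equals the rich set of S; (ii) v(f(r)) = v(d_f) for every r in an S-poor neighborhood of C_S; (iii) v(f(r)) takes the same value for all r in S-poor neighborhoods of C_S; (iv) the column vector (m_t)_{t∈S'} is a solution of A·x = v(d_f)·(1,…,1)^T. -/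
open Polynomial

section Aux
open IsLocalRing IsDiscreteValuationRing
variable {R : Type*} [CommRing R] [IsDomain R] [IsDiscreteValuationRing R]

theorem addVal_neg (a : R) : addVal R (-a) = addVal R a := by
  have h1 : addVal R (-1 : R) = 0 := by
    obtain ⟨ϖ, hϖ⟩ := exists_irreducible R
    have := addVal_def (-1 : R) (-1) hϖ 0 (by simp)
    simpa using this
  calc addVal R (-a) = addVal R ((-1) * a) := by ring_nf
    _ = addVal R (-1) + addVal R a := addVal_mul
    _ = addVal R a := by rw [h1, zero_add]

theorem mem_maxpow {x : R} {n : ℕ} :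
    x ∈ IsLocalRing.maximalIdeal R ^ n ↔ (n : ℕ∞) ≤ addVal R x := by
  obtain ⟨ϖ, hϖ⟩ := exists_irreducible R
  rw [hϖ.maximalIdeal_eq, Ideal.span_singleton_pow, Ideal.mem_span_singleton,
    ← addVal_le_iff_dvd, hϖ.addVal_pow]

theorem addVal_eq_mval (x : R) (hx : x ≠ 0) : addVal R x = (mval R x : ℕ∞) := by
  have hne : addVal R x ≠ ⊤ := fun h => hx (addVal_eq_top_iff.mp h)
  obtain ⟨k, hk⟩ := WithTop.ne_top_iff_exists.mp hne
  have hset : {n : ℕ | x ∈ IsLocalRing.maximalIdeal R ^ n} = Set.Iic k := by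
    ext n
    simp only [Set.mem_setOf_eq, mem_maxpow, ← hk, Set.mem_Iic]
    exact Nat.cast_le
  rw [mval, hset, csSup_Iic]
  exact hk.symm

theorem vR_eq_addVal (x : R) : vR R x = addVal R x := by
  rw [vR]
  split_ifs with h
  · rw [h, addVal_zero]
  · rw [addVal_eq_mval x h]

theorem addVal_strict_add {a b : R} (h : addVal R a < addVal R b) :
    addVal R (a + b) = addVal R a := by
  apply le_antisymm
  · by_contra hlt
    push_neg at hlt
    have h2 : min (addVal R (a + b)) (addVal R (-b)) ≤ addVal R a := by
      have := addVal_add (R := R) (a := a + b) (b := -b)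
      simpa using this
    rw [addVal_neg] at h2
    rcases min_le_iff.mp h2 with h1 | h1
    · exact absurd h1 (not_le.mpr hlt)
    · exact absurd h1 (not_le.mpr h)
  · calc addVal R a = min (addVal R a) (addVal R b) := (min_eq_left h.le).symm
      _ ≤ addVal R (a + b) := addVal_add

theorem mem_resClass_iff {r s : R} {n : ℕ} :
    r ∈ resClass R s n ↔ (n : ℕ∞) ≤ addVal R (r - s) := mem_maxpow

theorem self_mem_resClass (s : R) (n : ℕ) : s ∈ resClass R s n := by
  rw [mem_resClass_iff, sub_self, addVal_zero]; exact le_top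

theorem addVal_sub_of_both_mem {r s t : R} {n : ℕ} (hr : r ∈ resClass R t n)
    (hs : s ∈ resClass R t n) : (n : ℕ∞) ≤ addVal R (r - s) := by
  rw [mem_resClass_iff] at hr hs
  have h : r - s = (r - t) + (-(s - t)) := by ring
  rw [h]
  calc (n : ℕ∞) ≤ min (addVal R (r - t)) (addVal R (-(s - t))) := by
        rw [addVal_neg]; exact le_min hr hs
    _ ≤ _ := addVal_add

theorem resClass_eq_of_mem {r s : R} {n : ℕ} (h : r ∈ resClass R s n) :
    resClass R r n = resClass R s n := by
  ext x
  constructor <;> intro hx <;> rw [mem_resClass_iff] at hx ⊢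
  · have h2 : x - s = (x - r) + (r - s) := by ring
    rw [h2]
    exact le_trans (le_min hx (mem_resClass_iff.mp h)) addVal_add
  · have hrs := mem_resClass_iff.mp h
    have h2 : x - r = (x - s) + (-(r - s)) := by ring
    rw [h2]
    refine le_trans (le_min hx ?_) addVal_add
    rwa [addVal_neg]

theorem resClass_subset_level {s t : R} {a b : ℕ} (h : resClass R s a ⊆ resClass R t b) :
    b ≤ a := by
  obtain ⟨ϖ, hϖ⟩ := exists_irreducible R
  have h1 : s + ϖ ^ a ∈ resClass R s a := by
    rw [mem_resClass_iff]
    simp [hϖ.addVal_pow]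
  have h2 : s ∈ resClass R s a := self_mem_resClass s a
  have h3 := addVal_sub_of_both_mem (h h1) (h h2)
  have h4 : s + ϖ ^ a - s = ϖ ^ a := by ring
  rw [h4, hϖ.addVal_pow, Nat.cast_le] at h3
  exact h3

theorem resClass_eq_level {s t : R} {a b : ℕ} (h : resClass R s a = resClass R t b) :
    a = b :=
  le_antisymm (resClass_subset_level h.superset) (resClass_subset_level h.subset)

theorem addVal_lt_of_disjoint {s t : R} {a b : ℕ}
    (h : Disjoint (resClass R s a) (resClass R t b)) :
    addVal R (s - t) < a ∧ addVal R (s - t) < b := by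
  constructor
  · by_contra hc
    push_neg at hc
    have ht1 : t ∈ resClass R s a := by
      rw [mem_resClass_iff]
      have h2 : t - s = -(s - t) := by ring
      rwa [h2, addVal_neg]
    exact (Set.disjoint_left.mp h ht1 (self_mem_resClass t b)).elim
  · by_contra hc
    push_neg at hc
    have hs1 : s ∈ resClass R t b := mem_resClass_iff.mpr hc
    exact (Set.disjoint_left.mp h (self_mem_resClass s a) hs1).elim

theorem addVal_cross {s t r u : R} {a b : ℕ}
    (h : Disjoint (resClass R s a) (resClass R t b))
    (hr : r ∈ resClass R s a) (hu : u ∈ resClass R t b) :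
    addVal R (r - u) = addVal R (s - t) := by
  obtain ⟨ha, hb⟩ := addVal_lt_of_disjoint h
  rw [mem_resClass_iff] at hr hu
  have key : r - u = (s - t) + ((r - s) + (-(u - t))) := by ring
  rw [key, addVal_strict_add]
  calc addVal R (s - t) < min (addVal R (r - s)) (addVal R (-(u - t))) := by
        rw [addVal_neg]
        exact lt_min (lt_of_lt_of_le ha hr) (lt_of_lt_of_le hb hu)
    _ ≤ _ := addVal_add

theorem addVal_prod {ι : Type*} (s : Finset ι) (g : ι → R) :
    addVal R (∏ i ∈ s, g i) = ∑ i ∈ s, addVal R (g i) := by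
  classical
  induction s using Finset.induction with
  | empty => simp [addVal_one]
  | insert a s' h ih => rw [Finset.prod_insert h, Finset.sum_insert h, addVal_mul, ih]

end Aux

section Aux2
open IsLocalRing IsDiscreteValuationRing
variable {R : Type*} [CommRing R] [IsDomain R] [IsDiscreteValuationRing R]

theorem enat_eq_of_between {v : ℕ∞} {n : ℕ} (h1 : (n : ℕ∞) ≤ v)
    (h2 : v < ((n + 1 : ℕ) : ℕ∞)) : v = (n : ℕ∞) := by
  refine le_antisymm ?_ h1
  have h2' : v < (n : ℕ∞) + 1 := by
    rw [Nat.cast_add, Nat.cast_one] at h2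
    exact h2
  exact (ENat.lt_add_one_iff (by simp)).mp h2'

theorem resClass_anti {s : R} {n k : ℕ} (h : n ≤ k) :
    resClass R s k ⊆ resClass R s n := by
  intro x hx
  rw [mem_resClass_iff] at hx ⊢
  exact le_trans (Nat.cast_le.mpr h) hx

theorem mem_resClass_comm {r s : R} {n : ℕ} :
    r ∈ resClass R s n ↔ s ∈ resClass R r n := by
  rw [mem_resClass_iff, mem_resClass_iff]
  constructor <;> intro hx
  · have h : s - r = -(r - s) := by ring
    rwa [h, addVal_neg]
  · have h : r - s = -(s - r) := by ring
    rwa [h, addVal_neg]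

end Aux2

open IsLocalRing IsDiscreteValuationRing in
/-- With `f = ∏_{s ∈ S}(x - s)^{h s}`, `S'` a balanced set associated to
`S`, `A` the partition matrix of `C_S` indexed by `S'`, `m t = ∑_{s ∈ S_t} h s`, and `d_f`
a generator of the fixed divisor of `f`, the following are equivalent:
(i) `Posh(f)` equals the rich set of `S`;
(ii) `v (f r) = v d_f` for every `r` in an `S`-poor neighborhood;
(iii) `v (f r)` takes the same value for all `r` in `S`-poor neighborhoods;
(iv) `(m t)_{t ∈ S'}` solves `A · x = v d_f · (1, …, 1)ᵀ`. -/
theorem statement14 (R : Type*) [CommRing R] [IsDomain R] [IsDiscreteValuationRing R]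
    [Finite (IsLocalRing.ResidueField R)]
    (S : Finset R) (hSne : S.Nonempty) (h : R → ℕ) (hh : ∀ s ∈ S, 0 < h s)
    (f : Polynomial R) (hfdef : f = ∏ s ∈ S, (Polynomial.X - Polynomial.C s) ^ h s)
    (ρ : R → ℕ) (hρ : IsSPartition R S ρ)
    (S' : Finset R) (hS' : IsAssociatedBalancedSubset R S S' ρ)
    (m : R → ℕ)
    (hm : ∀ t ∈ S',
      m t = ∑ᶠ s ∈ {s : R | s ∈ S ∧ resClass R s (ρ s) = resClass R t (ρ t)}, h s)
    (df : R) (hdf : fixDiv R f = Ideal.span {df}) :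
    List.TFAE [
      poshR R f = richSet R S ρ,
      ∀ r : R, IsPoorElt R S ρ r → vR R (f.eval r) = vR R df,
      ∀ r r' : R, IsPoorElt R S ρ r → IsPoorElt R S ρ r' →
        vR R (f.eval r) = vR R (f.eval r'),
      ∀ t : {x // x ∈ S'},
        (∑ u : {x // x ∈ S'}, partitionMatrix R S' ρ t u * (m (u : R) : ℤ)) =
          (mval R df : ℤ)] := by
  classical
  obtain ⟨hcovS, heqd, hnb⟩ := hρ
  obtain ⟨hsub, hbal, hdisj', hcov'⟩ := hS'
  have hS'ne : S'.Nonempty := hbal.1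
  -- block equality for intersecting classes of elements of S
  have hblk_eq : ∀ s ∈ S, ∀ t ∈ S, ∀ r : R, r ∈ resClass R s (ρ s) →
      r ∈ resClass R t (ρ t) → resClass R s (ρ s) = resClass R t (ρ t) := by
    intro s hs t ht r hrs hrt
    rcases heqd s hs t ht with hq | hq
    · exact hq
    · exact (Set.disjoint_left.mp hq hrs hrt).elim
  have hmemP : ∀ s ∈ S, ∀ t ∈ S, (s ∈ resClass R t (ρ t) ↔
      resClass R s (ρ s) = resClass R t (ρ t)) := by
    intro s hs t ht
    constructor
    · intro hq
      exact hblk_eq s hs t ht s (self_mem_resClass _ _) hq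
    · intro hq
      rw [← hq]
      exact self_mem_resClass _ _
  have hblk_exists : ∀ r : R, ∃ t, t ∈ S' ∧ r ∈ resClass R t (ρ t) := by
    intro r
    have hr : r ∈ ⋃ s ∈ S', resClass R s (ρ s) := by rw [hcov']; trivial
    simpa using hr
  have hblk_uniq : ∀ t ∈ S', ∀ u ∈ S', ∀ r : R, r ∈ resClass R t (ρ t) →
      r ∈ resClass R u (ρ u) → t = u := by
    intro t ht u hu r h1 h2
    by_contra hne
    exact Set.disjoint_left.mp (hdisj' t ht u hu hne) h1 h2
  choose blk hblkS' hblkmem using hblk_exists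
  -- m as a Finset sum
  have hmsum : ∀ t ∈ S',
      m t = ∑ s ∈ S.filter (fun s => resClass R s (ρ s) = resClass R t (ρ t)), h s := by
    intro t ht
    rw [hm t ht]
    have hset : {s : R | s ∈ S ∧ resClass R s (ρ s) = resClass R t (ρ t)} =
        ↑(S.filter (fun s => resClass R s (ρ s) = resClass R t (ρ t))) := by
      ext s; simp
    rw [hset, finsum_mem_coe_finset]
  -- the key quantity
  set N : R → ℕ := fun t =>
    ρ t * m t + ∑ u ∈ S'.erase t, mval R (t - u) * m u with hN
  set E : ℕ := (S'.image N).min' (hS'ne.image N) with hE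
  obtain ⟨t0, ht0, hNt0⟩ : ∃ t ∈ S', N t = E := by
    have hq := (S'.image N).min'_mem (hS'ne.image N)
    rw [Finset.mem_image] at hq
    obtain ⟨t, ht, hNt⟩ := hq
    exact ⟨t, ht, hNt⟩
  have hEle : ∀ t ∈ S', E ≤ N t := fun t ht =>
    Finset.min'_le _ _ (Finset.mem_image_of_mem N ht)
  -- valuation of f at any point
  have hfeval : ∀ r : R, addVal R (f.eval r) = ∑ s ∈ S, h s • addVal R (r - s) := by
    intro r
    rw [hfdef, Polynomial.eval_prod, addVal_prod]
    refine Finset.sum_congr rfl fun s hs => ?_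
    rw [Polynomial.eval_pow, Polynomial.eval_sub, Polynomial.eval_X, Polynomial.eval_C,
      addVal_pow]
  -- outside terms
  have hterm_out : ∀ t ∈ S', ∀ r ∈ resClass R t (ρ t), ∀ s ∈ S,
      ¬ (resClass R s (ρ s) = resClass R t (ρ t)) →
      addVal R (r - s) = addVal R (t - s) := by
    intro t ht r hr s hs hne
    have hd : Disjoint (resClass R t (ρ t)) (resClass R s (ρ s)) := by
      rcases heqd t (hsub ht) s hs with hq | hq
      · exact absurd hq.symm hne
      · exact hq
    exact addVal_cross hd hr (self_mem_resClass s (ρ s))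
  -- a block for every element of S
  have hSblk : ∀ s ∈ S, resClass R s (ρ s) = resClass R (blk s) (ρ (blk s)) :=
    fun s hs => (hmemP s hs (blk s) (hsub (hblkS' s))).mp (hblkmem s)
  -- second (outside) sum
  have hsecond : ∀ t ∈ S', ∀ r ∈ resClass R t (ρ t),
      (∑ s ∈ S.filter (fun s => ¬ resClass R s (ρ s) = resClass R t (ρ t)),
        h s • addVal R (r - s))
      = ((∑ u ∈ S'.erase t, mval R (t - u) * m u : ℕ) : ℕ∞) := by
    intro t ht r hr
    have hmap : ∀ s ∈ S.filter (fun s => ¬ resClass R s (ρ s) = resClass R t (ρ t)),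
        blk s ∈ S'.erase t := by
      intro s hs
      rw [Finset.mem_filter] at hs
      refine Finset.mem_erase.mpr ⟨?_, hblkS' s⟩
      intro hbt
      exact hs.2 (by rw [hSblk s hs.1, hbt])
    rw [← Finset.sum_fiberwise_of_maps_to hmap (fun s => h s • addVal R (r - s)),
      Nat.cast_sum]
    refine Finset.sum_congr rfl fun u hu => ?_
    have hu' : u ∈ S' := Finset.mem_of_mem_erase hu
    have hut : u ≠ t := Finset.ne_of_mem_erase hu
    have htu : t ≠ u := Ne.symm hut
    have hfib : (S.filter (fun s => ¬ resClass R s (ρ s) = resClass R t (ρ t))).filter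
        (fun s => blk s = u)
        = S.filter (fun s => resClass R s (ρ s) = resClass R u (ρ u)) := by
      ext s
      simp only [Finset.mem_filter, and_assoc]
      constructor
      · rintro ⟨hsS, _, hblku⟩
        refine ⟨hsS, ?_⟩
        rw [← hblku]
        exact hSblk s hsS
      · rintro ⟨hsS, hPu⟩
        have hsu : s ∈ resClass R u (ρ u) := (hmemP s hsS u (hsub hu')).mpr hPu
        have hbu : blk s = u := hblk_uniq (blk s) (hblkS' s) u hu' s (hblkmem s) hsu
        refine ⟨hsS, ?_, hbu⟩
        intro hPt
        have hueq : resClass R u (ρ u) = resClass R t (ρ t) := by rw [← hPu, hPt]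
        have humem : u ∈ resClass R t (ρ t) := by
          rw [← hueq]; exact self_mem_resClass _ _
        exact hut (hblk_uniq u hu' t ht u (self_mem_resClass _ _) humem)
    rw [hfib]
    have hcast : addVal R (t - u) = ((mval R (t - u) : ℕ) : ℕ∞) :=
      addVal_eq_mval _ (sub_ne_zero.mpr htu)
    have hterm : ∀ s ∈ S.filter (fun s => resClass R s (ρ s) = resClass R u (ρ u)),
        h s • addVal R (r - s) = ((h s * mval R (t - u) : ℕ) : ℕ∞) := by
      intro s hs
      rw [Finset.mem_filter] at hs
      obtain ⟨hsS, hPu⟩ := hs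
      have hsu : s ∈ resClass R u (ρ u) := (hmemP s hsS u (hsub hu')).mpr hPu
      have hnPt : ¬ resClass R s (ρ s) = resClass R t (ρ t) := by
        intro hPt
        have hueq : resClass R u (ρ u) = resClass R t (ρ t) := by rw [← hPu, hPt]
        have humem : u ∈ resClass R t (ρ t) := by
          rw [← hueq]; exact self_mem_resClass _ _
        exact hut (hblk_uniq u hu' t ht u (self_mem_resClass _ _) humem)
      rw [hterm_out t ht r hr s hsS hnPt,
        addVal_cross (hdisj' t ht u hu' htu) (self_mem_resClass t (ρ t)) hsu, hcast,
        nsmul_eq_mul, ← Nat.cast_mul]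
    rw [Finset.sum_congr rfl hterm, ← Nat.cast_sum, ← Finset.sum_mul, ← hmsum u hu',
      mul_comm]
  -- inside terms for poor elements
  have hpoorval : ∀ t ∈ S', ∀ r, r ∈ resClass R t (ρ t) →
      resClass R r (ρ t + 1) ∩ (S : Set R) = ∅ →
      addVal R (f.eval r) = (N t : ℕ∞) := by
    intro t ht r hrt hre
    rw [hfeval r, ← Finset.sum_filter_add_sum_filter_not S
      (fun s => resClass R s (ρ s) = resClass R t (ρ t)) (fun s => h s • addVal R (r - s)),
      hsecond t ht r hrt]
    have hfirst : ∑ s ∈ S.filter (fun s => resClass R s (ρ s) = resClass R t (ρ t)),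
        h s • addVal R (r - s) = ((ρ t * m t : ℕ) : ℕ∞) := by
      have hterm : ∀ s ∈ S.filter (fun s => resClass R s (ρ s) = resClass R t (ρ t)),
          h s • addVal R (r - s) = ((h s * ρ t : ℕ) : ℕ∞) := by
        intro s hs
        rw [Finset.mem_filter] at hs
        obtain ⟨hsS, hP⟩ := hs
        have hsmem : s ∈ resClass R t (ρ t) := (hmemP s hsS t (hsub ht)).mpr hP
        have hval : addVal R (r - s) = ((ρ t : ℕ) : ℕ∞) := by
          refine enat_eq_of_between (addVal_sub_of_both_mem hrt hsmem) ?_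
          by_contra hc
          push_neg at hc
          have hsin : s ∈ resClass R r (ρ t + 1) := by
            rw [mem_resClass_comm, mem_resClass_iff]
            exact hc
          have hbad : s ∈ resClass R r (ρ t + 1) ∩ (S : Set R) := ⟨hsin, hsS⟩
          rw [hre] at hbad
          exact hbad
        rw [hval, nsmul_eq_mul, ← Nat.cast_mul]
      rw [Finset.sum_congr rfl hterm, ← Nat.cast_sum, ← Finset.sum_mul, ← hmsum t ht,
        mul_comm]
    rw [hfirst, ← Nat.cast_add]
  have hpoor_block : ∀ r : R, IsPoorElt R S ρ r → ∃ t, t ∈ S' ∧ r ∈ resClass R t (ρ t) ∧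
      resClass R r (ρ t + 1) ∩ (S : Set R) = ∅ := by
    rintro r ⟨s0, hs0, hrs0, hdisj0⟩
    refine ⟨blk r, hblkS' r, hblkmem r, ?_⟩
    have heq := hblk_eq s0 hs0 (blk r) (hsub (hblkS' r)) r hrs0 (hblkmem r)
    have hρeq : ρ s0 = ρ (blk r) := resClass_eq_level heq
    rw [← hρeq]
    exact hdisj0
  have hpoorexists : ∀ t ∈ S', ∃ r, r ∈ resClass R t (ρ t) ∧
      resClass R r (ρ t + 1) ∩ (S : Set R) = ∅ ∧ IsPoorElt R S ρ r := by
    intro t ht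
    obtain ⟨_, u, husub, huempty⟩ := hnb t (hsub ht)
    exact ⟨u, husub (self_mem_resClass _ _), huempty,
      ⟨t, hsub ht, husub (self_mem_resClass _ _), huempty⟩⟩
  -- rich elements have large valuation
  have hrichval : ∀ s0 ∈ S, ∀ r ∈ resClass R s0 (ρ s0 + 1), ∀ t, t ∈ S' →
      resClass R s0 (ρ s0) = resClass R t (ρ t) →
      (N t : ℕ∞) < addVal R (f.eval r) := by
    intro s0 hs0 r hrs0 t ht hPeq
    have hρeq : ρ s0 = ρ t := resClass_eq_level hPeq
    have hrt : r ∈ resClass R t (ρ t) := by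
      rw [← hPeq]
      exact resClass_anti (Nat.le_succ _) hrs0
    have hs0f : s0 ∈ S.filter (fun s => resClass R s (ρ s) = resClass R t (ρ t)) :=
      Finset.mem_filter.mpr ⟨hs0, hPeq⟩
    have hfirst : ((m t * ρ t + h s0 : ℕ) : ℕ∞) ≤
        ∑ s ∈ S.filter (fun s => resClass R s (ρ s) = resClass R t (ρ t)),
          h s • addVal R (r - s) := by
      have hLsum : (m t * ρ t + h s0 : ℕ) =
          ∑ s ∈ S.filter (fun s => resClass R s (ρ s) = resClass R t (ρ t)),
            (h s * ρ t + if s = s0 then h s else 0) := by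
        rw [Finset.sum_add_distrib, ← Finset.sum_mul, ← hmsum t ht,
          Finset.sum_ite_eq' _ s0 h, if_pos hs0f]
      rw [hLsum, Nat.cast_sum]
      refine Finset.sum_le_sum fun s hs => ?_
      rw [Finset.mem_filter] at hs
      obtain ⟨hsS, hP⟩ := hs
      have hsmem : s ∈ resClass R t (ρ t) := (hmemP s hsS t (hsub ht)).mpr hP
      by_cases hss0 : s = s0
      · subst hss0
        have hval : ((ρ t + 1 : ℕ) : ℕ∞) ≤ addVal R (r - s) := by
          rw [← hρeq]
          exact mem_resClass_iff.mp hrs0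
        calc ((h s * ρ t + if s = s then h s else 0 : ℕ) : ℕ∞)
            = ((h s * (ρ t + 1) : ℕ) : ℕ∞) := by rw [if_pos rfl, Nat.mul_succ]
          _ ≤ h s • addVal R (r - s) := by
              rw [nsmul_eq_mul, Nat.cast_mul]
              exact mul_le_mul_right hval _
      · rw [if_neg hss0, add_zero]
        have hval : ((ρ t : ℕ) : ℕ∞) ≤ addVal R (r - s) :=
          addVal_sub_of_both_mem hrt hsmem
        rw [nsmul_eq_mul, Nat.cast_mul]
        exact mul_le_mul_right hval _
    have htotal : ((N t + h s0 : ℕ) : ℕ∞) ≤ addVal R (f.eval r) := by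
      rw [hfeval r, ← Finset.sum_filter_add_sum_filter_not S
        (fun s => resClass R s (ρ s) = resClass R t (ρ t)) (fun s => h s • addVal R (r - s)),
        hsecond t ht r hrt]
      calc ((N t + h s0 : ℕ) : ℕ∞)
          = ((m t * ρ t + h s0 : ℕ) : ℕ∞)
            + ((∑ u ∈ S'.erase t, mval R (t - u) * m u : ℕ) : ℕ∞) := by
            rw [← Nat.cast_add]
            congr 1
            simp only [hN]
            ring
        _ ≤ _ := add_le_add_left hfirst _
    calc (N t : ℕ∞) < ((N t + h s0 : ℕ) : ℕ∞) := by
          rw [Nat.cast_lt]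
          have := hh s0 hs0
          omega
      _ ≤ _ := htotal
  -- dichotomy
  have hpoor_not_rich : ∀ r : R, IsPoorElt R S ρ r → r ∉ richSet R S ρ := by
    intro r hpoor hrich
    obtain ⟨t, ht, hrt, hempty⟩ := hpoor_block r hpoor
    rw [richSet, Set.mem_iUnion₂] at hrich
    obtain ⟨s, hs, hrs⟩ := hrich
    have hrs' : r ∈ resClass R s (ρ s) := resClass_anti (Nat.le_succ _) hrs
    have heq := hblk_eq s hs t (hsub ht) r hrs' hrt
    have hρeq : ρ s = ρ t := resClass_eq_level heq
    have : s ∈ resClass R r (ρ t + 1) ∩ (S : Set R) := by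
      refine ⟨?_, hs⟩
      rw [← hρeq]
      exact mem_resClass_comm.mp hrs
    rw [hempty] at this
    exact this
  have hdichot : ∀ r : R, IsPoorElt R S ρ r ∨ r ∈ richSet R S ρ := by
    intro r
    by_cases hrich : r ∈ richSet R S ρ
    · exact Or.inr hrich
    refine Or.inl ⟨blk r, hsub (hblkS' r), hblkmem r, ?_⟩
    by_contra hne
    obtain ⟨s, hsmem, hsS⟩ := Set.nonempty_iff_ne_empty.mpr hne
    have hsblk : s ∈ resClass R (blk r) (ρ (blk r)) := by
      have h1 : resClass R r (ρ (blk r)) = resClass R (blk r) (ρ (blk r)) :=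
        resClass_eq_of_mem (hblkmem r)
      rw [← h1]
      exact resClass_anti (Nat.le_succ _) hsmem
    have heq : resClass R s (ρ s) = resClass R (blk r) (ρ (blk r)) :=
      (hmemP s hsS (blk r) (hsub (hblkS' r))).mp hsblk
    have hρeq : ρ s = ρ (blk r) := resClass_eq_level heq
    apply hrich
    rw [richSet, Set.mem_iUnion₂]
    refine ⟨s, hsS, ?_⟩
    rw [hρeq]
    exact mem_resClass_comm.mp hsmem
  -- minimum of the valuation
  have hminval : ∀ r : R, (E : ℕ∞) ≤ addVal R (f.eval r) := by
    intro r
    rcases hdichot r with hpoor | hrich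
    · obtain ⟨t, ht, hrt, hempty⟩ := hpoor_block r hpoor
      rw [hpoorval t ht r hrt hempty, Nat.cast_le]
      exact hEle t ht
    · rw [richSet, Set.mem_iUnion₂] at hrich
      obtain ⟨s, hs, hrs⟩ := hrich
      have hlt := hrichval s hs r hrs (blk s) (hblkS' s) (hSblk s hs)
      calc (E : ℕ∞) ≤ (N (blk s) : ℕ∞) := Nat.cast_le.mpr (hEle _ (hblkS' s))
        _ ≤ _ := hlt.le
  -- the infimum
  have hiInf : (⨅ t : R, vR R (f.eval t)) = (E : ℕ∞) := by
    apply le_antisymm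
    · obtain ⟨r0, hr0, hr0e, _⟩ := hpoorexists t0 ht0
      calc (⨅ t : R, vR R (f.eval t)) ≤ vR R (f.eval r0) := iInf_le _ r0
        _ = (E : ℕ∞) := by rw [vR_eq_addVal, hpoorval t0 ht0 r0 hr0 hr0e, hNt0]
    · exact le_iInf fun r => by rw [vR_eq_addVal]; exact hminval r
  -- the fixed divisor
  have hdfval : addVal R df = (E : ℕ∞) ∧ df ≠ 0 := by
    have hdvd : ∀ r : R, df ∣ f.eval r := by
      intro r
      have h1 : f.eval r ∈ fixDiv R f := Ideal.subset_span ⟨r, rfl⟩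
      rw [hdf, Ideal.mem_span_singleton] at h1
      exact h1
    obtain ⟨r0, hr0, hr0e, _⟩ := hpoorexists t0 ht0
    have hval0 : addVal R (f.eval r0) = (E : ℕ∞) := by
      rw [hpoorval t0 ht0 r0 hr0 hr0e, hNt0]
    have hne0 : f.eval r0 ≠ 0 := by
      intro hz
      rw [hz, addVal_zero] at hval0
      exact (by simp : (⊤ : ℕ∞) ≠ (E : ℕ∞)) hval0
    have hdfne : df ≠ 0 := by
      rintro rfl
      exact hne0 (zero_dvd_iff.mp (hdvd r0))
    refine ⟨le_antisymm ?_ ?_, hdfne⟩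
    · rw [← hval0]
      exact addVal_le_iff_dvd.mpr (hdvd r0)
    · have hspan : fixDiv R f ≤ IsLocalRing.maximalIdeal R ^ E := by
        rw [fixDiv]
        apply Ideal.span_le.mpr
        rintro _ ⟨r, rfl⟩
        exact mem_maxpow.mpr (hminval r)
      have hdfmem : df ∈ fixDiv R f := by
        rw [hdf]
        exact Ideal.subset_span rfl
      exact mem_maxpow.mp (hspan hdfmem)
  have hvRdf : vR R df = (E : ℕ∞) := by
    rw [vR_eq_addVal]; exact hdfval.1
  have hmvdf : mval R df = E := by
    have h1 := hdfval.1
    rw [addVal_eq_mval df hdfval.2, Nat.cast_inj] at h1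
    exact h1
  -- statement (iv) normalized
  have hivEq : ∀ t : {x // x ∈ S'},
      (∑ u : {x // x ∈ S'}, partitionMatrix R S' ρ t u * (m (u : R) : ℤ))
        = ((N (t : R)) : ℤ) := by
    intro t
    have h1 : (∑ u : {x // x ∈ S'}, partitionMatrix R S' ρ t u * (m (u : R) : ℤ))
        = ∑ u ∈ S', (if (t : R) = u then (ρ (t : R) : ℤ) else (mval R ((t : R) - u) : ℤ))
            * (m u : ℤ) := by
      rw [← Finset.sum_coe_sort S'
        (fun u => (if (t : R) = u then (ρ (t : R) : ℤ) else (mval R ((t : R) - u) : ℤ))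
          * (m u : ℤ))]
      rfl
    rw [h1, ← Finset.sum_erase_add S' _ t.2, if_pos rfl]
    have h2 : ∀ u ∈ S'.erase (t : R),
        (if (t : R) = u then (ρ (t : R) : ℤ) else (mval R ((t : R) - u) : ℤ)) * (m u : ℤ)
        = ((mval R ((t : R) - u) * m u : ℕ) : ℤ) := by
      intro u hu
      rw [if_neg (Ne.symm (Finset.ne_of_mem_erase hu)), Nat.cast_mul]
    rw [Finset.sum_congr rfl h2, ← Nat.cast_sum]
    simp only [hN]
    push_cast
    ring
  -- now the TFAE
  tfae_have 2 → 3
  | h2, r, r', hr, hr' => by rw [h2 r hr, h2 r' hr']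
  tfae_have 3 → 4
  | h3 => by
    intro t
    rw [hivEq t, hmvdf, Nat.cast_inj]
    obtain ⟨r1, hr1, hr1e, hr1poor⟩ := hpoorexists (t : R) t.2
    obtain ⟨r0, hr0, hr0e, hr0poor⟩ := hpoorexists t0 ht0
    have := h3 r1 r0 hr1poor hr0poor
    rw [vR_eq_addVal, vR_eq_addVal, hpoorval (t : R) t.2 r1 hr1 hr1e,
      hpoorval t0 ht0 r0 hr0 hr0e, hNt0, Nat.cast_inj] at this
    exact this
  tfae_have 4 → 2
  | h4, r, hr => by
    obtain ⟨t, ht, hrt, hre⟩ := hpoor_block r hr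
    have := h4 ⟨t, ht⟩
    rw [hivEq ⟨t, ht⟩, hmvdf, Nat.cast_inj] at this
    rw [vR_eq_addVal, hpoorval t ht r hrt hre, hvRdf, this]
  tfae_have 2 → 1
  | h2 => by
    ext r
    rw [poshR, Set.mem_setOf_eq, hiInf]
    constructor
    · intro hlt
      rcases hdichot r with hpoor | hrich
      · exfalso
        rw [h2 r hpoor, hvRdf] at hlt
        exact lt_irrefl _ hlt
      · exact hrich
    · intro hrich
      rw [richSet, Set.mem_iUnion₂] at hrich
      obtain ⟨s, hs, hrs⟩ := hrich
      have hlt := hrichval s hs r hrs (blk s) (hblkS' s) (hSblk s hs)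
      rw [vR_eq_addVal]
      calc (E : ℕ∞) ≤ (N (blk s) : ℕ∞) := Nat.cast_le.mpr (hEle _ (hblkS' s))
        _ < _ := hlt
  tfae_have 1 → 2
  | h1, r, hr => by
    have hnposh : r ∉ poshR R f := by
      rw [h1]
      exact hpoor_not_rich r hr
    rw [poshR, Set.mem_setOf_eq, hiInf, not_lt] at hnposh
    obtain ⟨t, ht, hrt, hre⟩ := hpoor_block r hr
    rw [vR_eq_addVal, hvRdf]
    apply le_antisymm
    · rwa [← vR_eq_addVal]
    · rw [← vR_eq_addVal]
      rw [vR_eq_addVal]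
      exact hminval r
  tfae_finish
end

section
/- Let n ≥ 1 and let A ∈ ℚ^{n×n} be a matrix with det(A) ≠ 0 such that the linear system A·x = (1,…,1)^T has a solution x ∈ ℚ^n all of whose coordinates are positive. Then det(A + J) ≠ 0, where J is the n×n matrix all of whose entries equal 1. -/
open Polynomial

/-- If `A ∈ ℚ^{n×n}` has nonzero determinant and `A · x = (1,…,1)ᵀ` has a
coordinatewise positive rational solution, then `det (A + J) ≠ 0` where `J` is the all-ones
matrix. -/
theorem statement17 (n : ℕ) (hn : 1 ≤ n) (A : Matrix (Fin n) (Fin n) ℚ) (hA : A.det ≠ 0)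
    (x : Fin n → ℚ) (hx : ∀ i, 0 < x i) (hAx : A.mulVec x = fun _ => 1) :
    (A + Matrix.of fun _ _ : Fin n => (1 : ℚ)).det ≠ 0 := by
  intro hdet
  obtain ⟨y, hy0, hy⟩ := (Matrix.exists_mulVec_eq_zero_iff).mpr hdet
  set s : ℚ := ∑ i, y i with hs
  -- (A+J) y = A y + (∑ y) • 1 = 0, so A (y + s • x) = A y + s • (A x) = 0
  have hAy : A.mulVec (y + s • x) = 0 := by
    have hJ : (Matrix.of fun _ _ : Fin n => (1 : ℚ)).mulVec y = fun _ => s := by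
      funext i
      simp [Matrix.mulVec, dotProduct, hs]
    have h1 : A.mulVec y + (fun _ => s) = 0 := by
      rw [← hJ, ← Matrix.add_mulVec, hy]
    have h2 : A.mulVec (s • x) = fun _ => s := by
      rw [Matrix.mulVec_smul, hAx]
      funext i; simp
    rw [Matrix.mulVec_add, h2, h1]
  have hyx : y + s • x = 0 := by
    by_contra h
    exact hA ((Matrix.exists_mulVec_eq_zero_iff).mp ⟨_, h, hAy⟩)
  have hy' : y = -(s • x) := by
    have := congrArg (fun v => v - s • x) hyx
    simpa [add_sub_cancel_right, sub_eq_neg_add] using this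
  have hsum : s = -(s * ∑ i, x i) := by
    rw [hs]
    nth_rewrite 1 [hy']
    simp [Finset.mul_sum]
    rfl
  have hxs : 0 < ∑ i, x i := Finset.sum_pos (fun i _ => hx i) (by
    simpa [Finset.univ_nonempty_iff] using Fin.pos_iff_nonempty.mp hn)
  have hs0 : s = 0 := by
    have : s * (1 + ∑ i, x i) = 0 := by linarith [hsum]
    rcases mul_eq_zero.mp this with h | h
    · exact h
    · linarith
  apply hy0
  rw [hy', hs0]; simp
end

section
/- Let (R,M) be a discrete valuation domain with finite residue field and valuation v, let C be an M-adic partition of R consisting of more than one block, and let T be a set of representatives of C, so C = {t + M^{n_t} : t ∈ T} with pairwise disjoint blocks covering R. Then the partition matrix A = (a_{s,t})_{s,t∈T} of C, with a_{t,t} = n_t and a_{s,t} = v(s−t) for s ≠ t, satisfies det(A) ≠ 0. -/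
open Polynomial

section AuxStatement18

open IsLocalRing

variable {R : Type*} [CommRing R] [IsDomain R] [IsDiscreteValuationRing R]

private lemma st18_exists_not_mem {x : R} (hx : x ≠ 0) :
    ∃ N : ℕ, x ∉ maximalIdeal R ^ N := by
  by_contra h
  push_neg at h
  have hbot : (⨅ i : ℕ, maximalIdeal R ^ i) = ⊥ :=
    Ideal.iInf_pow_eq_bot_of_isLocalRing _ (Ideal.IsMaximal.ne_top (maximalIdeal.isMaximal R))
  have hmem : x ∈ (⨅ i : ℕ, maximalIdeal R ^ i) := Submodule.mem_iInf _ |>.mpr h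
  rw [hbot] at hmem
  exact hx hmem

private lemma st18_bdd {x : R} (hx : x ≠ 0) :
    BddAbove {n : ℕ | x ∈ maximalIdeal R ^ n} := by
  obtain ⟨N, hN⟩ := st18_exists_not_mem hx
  refine ⟨N, fun k hk => ?_⟩
  by_contra hkN
  push_neg at hkN
  exact hN (Ideal.pow_le_pow_right hkN.le hk)

private lemma st18_mem_pow_mval {x : R} (hx : x ≠ 0) :
    x ∈ maximalIdeal R ^ mval R x :=
  Nat.sSup_mem ⟨0, by simp⟩ (st18_bdd hx)

private lemma st18_mval_lt {x : R} {N : ℕ} (hN : x ∉ maximalIdeal R ^ N) :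
    mval R x < N := by
  have hN0 : 0 < N := by
    rcases Nat.eq_zero_or_pos N with h | h
    · subst h; simp at hN
    · exact h
  have hle : mval R x ≤ N - 1 := by
    refine csSup_le ⟨0, by simp⟩ (fun k hk => ?_)
    by_contra hk'
    push_neg at hk'
    exact hN (Ideal.pow_le_pow_right (by omega) hk)
  omega

private lemma st18_min_mval_le {x y : R} (hx : x ≠ 0) (hy : y ≠ 0) (hxy : x + y ≠ 0) :
    min (mval R x) (mval R y) ≤ mval R (x + y) := by
  have h1 : x ∈ maximalIdeal R ^ min (mval R x) (mval R y) :=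
    Ideal.pow_le_pow_right (min_le_left _ _) (st18_mem_pow_mval hx)
  have h2 : y ∈ maximalIdeal R ^ min (mval R x) (mval R y) :=
    Ideal.pow_le_pow_right (min_le_right _ _) (st18_mem_pow_mval hy)
  exact le_csSup (st18_bdd hxy) (Ideal.add_mem _ h1 h2)

private lemma st18_mval_sub_comm (x y : R) : mval R (x - y) = mval R (y - x) := by
  unfold mval
  congr 1
  ext k
  have : y - x = -(x - y) := by ring
  simp only [Set.mem_setOf_eq, this, neg_mem_iff]

/-- A symmetric, entrywise nonnegative, strictly ultrametric integer matrix has a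
positive quadratic form. -/
private lemma st18_quadform_pos {ι : Type*} [DecidableEq ι] :
    ∀ (N : ℕ) (a : ι → ι → ℤ) (s : Finset ι), s.card ≤ N →
    (∀ i ∈ s, ∀ j ∈ s, a i j = a j i) →
    (∀ i ∈ s, ∀ j ∈ s, 0 ≤ a i j) →
    (∀ i ∈ s, 0 < a i i) →
    (∀ i ∈ s, ∀ j ∈ s, i ≠ j → a i j < a i i) →
    (∀ i ∈ s, ∀ j ∈ s, ∀ k ∈ s, min (a i k) (a k j) ≤ a i j) →
    ∀ x : ι → ℤ, (∃ i ∈ s, x i ≠ 0) →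
    0 < ∑ i ∈ s, ∑ j ∈ s, a i j * (x i * x j) := by
  intro N
  induction N with
  | zero =>
    rintro a s hcard _ _ _ _ _ x ⟨i, hi, _⟩
    rw [Nat.le_zero, Finset.card_eq_zero] at hcard
    subst hcard
    simp at hi
  | succ N ih =>
    rintro a s hcard hsym hnn hdiag hstrict hultra x ⟨iw, hiw, hxw⟩
    by_cases hs1 : s.card ≤ 1
    · -- singleton case
      have hseq : s = {iw} := by
        apply Finset.eq_singleton_iff_unique_mem.mpr
        exact ⟨hiw, fun b hb => Finset.card_le_one.mp hs1 b hb iw hiw⟩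
      subst hseq
      simp only [Finset.sum_singleton]
      have := hdiag iw (by simp)
      have hx2 : 0 < x iw * x iw := mul_self_pos.mpr hxw
      positivity
    · push_neg at hs1
      -- pick minimal off-diagonal entry
      classical
      set P : Finset (ι × ι) := (s ×ˢ s).filter (fun p => p.1 ≠ p.2) with hP
      have hPne : P.Nonempty := by
        obtain ⟨u, hu, v, hv, huv⟩ := Finset.one_lt_card.mp hs1
        exact ⟨(u, v), by simp [hP, Finset.mem_filter, Finset.mem_product, hu, hv, huv]⟩
      obtain ⟨p0, hp0P, hminp⟩ := Finset.exists_min_image P (fun p => a p.1 p.2) hPne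
      obtain ⟨i0, j0⟩ := p0
      simp only [hP, Finset.mem_filter, Finset.mem_product] at hp0P
      obtain ⟨⟨hi0s, hj0s⟩, hij0ne⟩ := hp0P
      set c : ℤ := a i0 j0 with hc
      have hc_le : ∀ i ∈ s, ∀ j ∈ s, i ≠ j → c ≤ a i j := by
        intro i hi j hj hij
        exact hminp (i, j) (by simp [hP, Finset.mem_filter, Finset.mem_product, hi, hj, hij])
      have hc0 : 0 ≤ c := hnn i0 hi0s j0 hj0s
      have hcd : ∀ i ∈ s, c < a i i := by
        intro i hi
        obtain ⟨j, hj, hjne⟩ := Finset.exists_mem_ne hs1 i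
        exact lt_of_le_of_lt (hc_le i hi j hj (Ne.symm hjne)) (hstrict i hi j hj (Ne.symm hjne))
      -- split s into two nonempty parts with cross entries equal to c
      set s1 : Finset ι := s.filter (fun i => c < a i i0) with hs1def
      set s2 : Finset ι := s \ s1 with hs2def
      have hs1sub : s1 ⊆ s := Finset.filter_subset _ _
      have hs2sub : s2 ⊆ s := Finset.sdiff_subset
      have hi0s1 : i0 ∈ s1 := by
        simp [hs1def, Finset.mem_filter, hi0s, hcd i0 hi0s]
      have hj0s2 : j0 ∈ s2 := by
        have : ¬ c < a j0 i0 := by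
          rw [hsym j0 hj0s i0 hi0s, ← hc]
          exact lt_irrefl c
        simp [hs2def, hs1def, Finset.mem_sdiff, Finset.mem_filter, hj0s, this]
      have hmem_s1 : ∀ i ∈ s, (i ∈ s1 ↔ c < a i i0) := by
        intro i hi; simp [hs1def, Finset.mem_filter, hi]
      have hmem_s2 : ∀ i ∈ s, (i ∈ s2 ↔ ¬ c < a i i0) := by
        intro i hi; simp [hs2def, Finset.mem_sdiff, hi, hmem_s1 i hi]
      have hcross : ∀ i ∈ s1, ∀ j ∈ s2, a i j = c := by
        intro i hi j hj
        have his : i ∈ s := hs1sub hi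
        have hjs : j ∈ s := hs2sub hj
        have hij : i ≠ j := by
          rintro rfl
          exact ((hmem_s2 i his).mp hj) ((hmem_s1 i his).mp hi)
        refine le_antisymm ?_ (hc_le i his j hjs hij)
        by_contra hgt
        push_neg at hgt
        have hji0 : c < a j i0 := by
          have hmin : min (a j i) (a i i0) ≤ a j i0 := hultra j hjs i0 hi0s i his
          have h1 : c < a j i := by rw [hsym j hjs i his]; exact hgt
          have h2 : c < a i i0 := (hmem_s1 i his).mp hi
          exact lt_of_lt_of_le (lt_min h1 h2) hmin
        exact ((hmem_s2 j hjs).mp hj) hji0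
      -- the shifted matrix
      set b : ι → ι → ℤ := fun i j => a i j - c with hb
      have hbody : ∀ t : Finset ι, t ⊆ s → t ≠ s →
          (0 ≤ ∑ i ∈ t, ∑ j ∈ t, b i j * (x i * x j)) ∧
          ((∃ i ∈ t, x i ≠ 0) → 0 < ∑ i ∈ t, ∑ j ∈ t, b i j * (x i * x j)) := by
        intro t hts htne
        have hcardt : t.card ≤ N := by
          have h1 : t.card < s.card := Finset.card_lt_card (lt_of_le_of_ne hts htne)
          omega
        have hbsym : ∀ i ∈ t, ∀ j ∈ t, b i j = b j i := fun i hi j hj => by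
          simp [hb, hsym i (hts hi) j (hts hj)]
        have hbnn : ∀ i ∈ t, ∀ j ∈ t, 0 ≤ b i j := by
          intro i hi j hj
          simp only [hb, sub_nonneg]
          by_cases hij : i = j
          · subst hij; exact (hcd i (hts hi)).le
          · exact hc_le i (hts hi) j (hts hj) hij
        have hbdiag : ∀ i ∈ t, 0 < b i i := fun i hi => by
          simp [hb, sub_pos, hcd i (hts hi)]
        have hbstrict : ∀ i ∈ t, ∀ j ∈ t, i ≠ j → b i j < b i i := fun i hi j hj hij => by
          simp only [hb, sub_lt_sub_iff_right]
          exact hstrict i (hts hi) j (hts hj) hij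
        have hbultra : ∀ i ∈ t, ∀ j ∈ t, ∀ k ∈ t, min (b i k) (b k j) ≤ b i j := by
          intro i hi j hj k hk
          have := hultra i (hts hi) j (hts hj) k (hts hk)
          simp only [hb]
          omega
        constructor
        · by_cases hex : ∃ i ∈ t, x i ≠ 0
          · exact (ih b t hcardt hbsym hbnn hbdiag hbstrict hbultra x hex).le
          · push_neg at hex
            have : ∑ i ∈ t, ∑ j ∈ t, b i j * (x i * x j) = 0 := by
              apply Finset.sum_eq_zero
              intro i hi
              apply Finset.sum_eq_zero
              intro j hj
              rw [hex i hi]; ring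
            rw [this]
        · exact fun hex => ih b t hcardt hbsym hbnn hbdiag hbstrict hbultra x hex
      have hs1ne : s1 ≠ s := fun h => ((hmem_s2 j0 hj0s).mp hj0s2) (by
        rw [← h] at hj0s; exact (hmem_s1 j0 (hs1sub hj0s)).mp hj0s)
      have hs2ne : s2 ≠ s := fun h => by
        have : i0 ∈ s2 := h ▸ hi0s
        exact ((hmem_s2 i0 hi0s).mp this) ((hmem_s1 i0 hi0s).mp hi0s1)
      obtain ⟨hB1nn, hB1pos⟩ := hbody s1 hs1sub hs1ne
      obtain ⟨hB2nn, hB2pos⟩ := hbody s2 hs2sub hs2ne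
      -- decomposition of the quadratic form
      set X1 : ℤ := ∑ i ∈ s1, x i with hX1
      set X2 : ℤ := ∑ i ∈ s2, x i with hX2
      have hdecomp : ∑ i ∈ s, ∑ j ∈ s, a i j * (x i * x j) =
          (∑ i ∈ s1, ∑ j ∈ s1, b i j * (x i * x j)) +
          (∑ i ∈ s2, ∑ j ∈ s2, b i j * (x i * x j)) + c * (X1 + X2) ^ 2 := by
        have hsplit : ∀ f : ι → ℤ, ∑ i ∈ s, f i = ∑ i ∈ s1, f i + ∑ i ∈ s2, f i := by
          intro f
          rw [hs2def, eq_comm, add_comm]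
          exact Finset.sum_sdiff hs1sub
        rw [hsplit]
        have hinner : ∀ i, ∑ j ∈ s, a i j * (x i * x j)
            = ∑ j ∈ s1, a i j * (x i * x j) + ∑ j ∈ s2, a i j * (x i * x j) := by
          intro i; exact hsplit _
        simp only [hinner]
        rw [Finset.sum_add_distrib, Finset.sum_add_distrib]
        have h12 : ∑ i ∈ s1, ∑ j ∈ s2, a i j * (x i * x j) = c * (X1 * X2) := by
          rw [hX1, hX2, Finset.sum_mul_sum, Finset.mul_sum]
          apply Finset.sum_congr rfl
          intro i hi
          rw [Finset.mul_sum]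
          apply Finset.sum_congr rfl
          intro j hj
          rw [hcross i hi j hj]
        have h21 : ∑ i ∈ s2, ∑ j ∈ s1, a i j * (x i * x j) = c * (X1 * X2) := by
          rw [hX1, hX2]
          have : ∀ i ∈ s2, ∀ j ∈ s1, a i j = c := by
            intro i hi j hj
            rw [hsym i (hs2sub hi) j (hs1sub hj)]
            exact hcross j hj i hi
          calc ∑ i ∈ s2, ∑ j ∈ s1, a i j * (x i * x j)
              = ∑ i ∈ s2, ∑ j ∈ s1, c * (x i * x j) := by
                apply Finset.sum_congr rfl; intro i hi
                apply Finset.sum_congr rfl; intro j hj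
                rw [this i hi j hj]
            _ = c * ((∑ i ∈ s1, x i) * (∑ i ∈ s2, x i)) := by
                rw [Finset.sum_mul_sum]
                rw [Finset.mul_sum]
                rw [Finset.sum_comm]
                apply Finset.sum_congr rfl; intro i hi
                rw [Finset.mul_sum]
                apply Finset.sum_congr rfl; intro j hj
                ring
        have h11 : ∑ i ∈ s1, ∑ j ∈ s1, a i j * (x i * x j)
            = (∑ i ∈ s1, ∑ j ∈ s1, b i j * (x i * x j)) + c * (X1 * X1) := by
          have : ∀ i ∈ s1, ∀ j ∈ s1, a i j * (x i * x j)
              = b i j * (x i * x j) + c * (x i * x j) := by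
            intro i _ j _; simp only [hb]; ring
          calc ∑ i ∈ s1, ∑ j ∈ s1, a i j * (x i * x j)
              = ∑ i ∈ s1, ∑ j ∈ s1, (b i j * (x i * x j) + c * (x i * x j)) := by
                apply Finset.sum_congr rfl; intro i hi
                apply Finset.sum_congr rfl; intro j hj
                exact this i hi j hj
            _ = (∑ i ∈ s1, ∑ j ∈ s1, b i j * (x i * x j))
                + ∑ i ∈ s1, ∑ j ∈ s1, c * (x i * x j) := by
                rw [← Finset.sum_add_distrib]
                apply Finset.sum_congr rfl; intro i _
                rw [Finset.sum_add_distrib]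
            _ = (∑ i ∈ s1, ∑ j ∈ s1, b i j * (x i * x j)) + c * (X1 * X1) := by
                congr 1
                rw [hX1, Finset.sum_mul_sum, Finset.mul_sum]
                apply Finset.sum_congr rfl; intro i _
                rw [Finset.mul_sum]
        have h22 : ∑ i ∈ s2, ∑ j ∈ s2, a i j * (x i * x j)
            = (∑ i ∈ s2, ∑ j ∈ s2, b i j * (x i * x j)) + c * (X2 * X2) := by
          have : ∀ i ∈ s2, ∀ j ∈ s2, a i j * (x i * x j)
              = b i j * (x i * x j) + c * (x i * x j) := by
            intro i _ j _; simp only [hb]; ring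
          calc ∑ i ∈ s2, ∑ j ∈ s2, a i j * (x i * x j)
              = ∑ i ∈ s2, ∑ j ∈ s2, (b i j * (x i * x j) + c * (x i * x j)) := by
                apply Finset.sum_congr rfl; intro i hi
                apply Finset.sum_congr rfl; intro j hj
                exact this i hi j hj
            _ = (∑ i ∈ s2, ∑ j ∈ s2, b i j * (x i * x j))
                + ∑ i ∈ s2, ∑ j ∈ s2, c * (x i * x j) := by
                rw [← Finset.sum_add_distrib]
                apply Finset.sum_congr rfl; intro i _
                rw [Finset.sum_add_distrib]
            _ = (∑ i ∈ s2, ∑ j ∈ s2, b i j * (x i * x j)) + c * (X2 * X2) := by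
                congr 1
                rw [hX2, Finset.sum_mul_sum, Finset.mul_sum]
                apply Finset.sum_congr rfl; intro i _
                rw [Finset.mul_sum]
        rw [h11, h12, h21, h22]
        ring
      rw [hdecomp]
      have hcsq : 0 ≤ c * (X1 + X2) ^ 2 := mul_nonneg hc0 (sq_nonneg _)
      have hiw12 : iw ∈ s1 ∨ iw ∈ s2 := by
        by_cases h : iw ∈ s1
        · exact Or.inl h
        · exact Or.inr (Finset.mem_sdiff.mpr ⟨hiw, h⟩)
      rcases hiw12 with h | h
      · have := hB1pos ⟨iw, h, hxw⟩
        linarith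
      · have := hB2pos ⟨iw, h, hxw⟩
        linarith

end AuxStatement18

open scoped Classical in
/-- The partition matrix of an `M`-adic partition of `R` with more than
one block has nonzero determinant. -/
theorem statement18 (R : Type*) [CommRing R] [IsDomain R] [IsDiscreteValuationRing R]
    [Finite (IsLocalRing.ResidueField R)]
    (T : Finset R) (n : R → ℕ)
    (hdisj : ∀ s ∈ T, ∀ t ∈ T, s ≠ t → Disjoint (resClass R s (n s)) (resClass R t (n t)))
    (hcover : (⋃ t ∈ T, resClass R t (n t)) = Set.univ)
    (hcard : 1 < T.card) :
    (partitionMatrix R T n).det ≠ 0 := by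
  classical
  intro hdet
  -- off-diagonal valuations are strictly smaller than the diagonal exponents
  have hne : ∀ s ∈ T, ∀ t ∈ T, s ≠ t → mval R (s - t) < n s := by
    intro s hs t ht hst
    have ht_in : t ∈ resClass R t (n t) := by
      simp [resClass, sub_self]
    have ht_notin : t ∉ resClass R s (n s) := fun h =>
      (Set.disjoint_left.mp (hdisj s hs t ht hst) h) ht_in
    have hnot : t - s ∉ IsLocalRing.maximalIdeal R ^ (n s) := ht_notin
    rw [st18_mval_sub_comm]
    exact st18_mval_lt hnot
  have hpos : ∀ s ∈ T, 0 < n s := by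
    intro s hs
    obtain ⟨t, ht, hts⟩ := Finset.exists_mem_ne hcard s
    have h1 := hne s hs t ht (Ne.symm hts)
    omega
  obtain ⟨v, hv0, hvA⟩ := Matrix.exists_mulVec_eq_zero_iff.mpr hdet
  obtain ⟨iw, hiw'⟩ := Function.ne_iff.mp hv0
  have hiw : v iw ≠ 0 := by simpa using hiw'
  set a : {x // x ∈ T} → {x // x ∈ T} → ℤ := fun i j => partitionMatrix R T n i j with ha
  have haeq : ∀ i j : {x // x ∈ T}, a i j =
      if (i : R) = (j : R) then (n (i : R) : ℤ) else (mval R ((i : R) - (j : R)) : ℤ) := by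
    intro i j
    simp only [ha, partitionMatrix, Matrix.of_apply]
  have hcoene : ∀ {i j : {x // x ∈ T}}, i ≠ j → (i : R) ≠ (j : R) := by
    intro i j hij h
    exact hij (Subtype.ext h)
  have hsym : ∀ i ∈ (Finset.univ : Finset {x // x ∈ T}), ∀ j ∈ Finset.univ, a i j = a j i := by
    intro i _ j _
    rw [haeq, haeq]
    by_cases h : (i : R) = (j : R)
    · have h2 : i = j := Subtype.ext h
      subst h2; rfl
    · rw [if_neg h, if_neg (Ne.symm h), st18_mval_sub_comm]
  have hnn : ∀ i ∈ (Finset.univ : Finset {x // x ∈ T}), ∀ j ∈ Finset.univ, 0 ≤ a i j := by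
    intro i _ j _
    rw [haeq]
    split_ifs <;> positivity
  have hdiag : ∀ i ∈ (Finset.univ : Finset {x // x ∈ T}), 0 < a i i := by
    intro i _
    rw [haeq, if_pos rfl]
    exact_mod_cast hpos (i : R) i.2
  have hstrict : ∀ i ∈ (Finset.univ : Finset {x // x ∈ T}), ∀ j ∈ Finset.univ, i ≠ j → a i j < a i i := by
    intro i _ j _ hij
    rw [haeq, haeq, if_pos rfl, if_neg (hcoene hij)]
    exact_mod_cast hne (i : R) i.2 (j : R) j.2 (hcoene hij)
  have hultra : ∀ i ∈ (Finset.univ : Finset {x // x ∈ T}), ∀ j ∈ Finset.univ, ∀ k ∈ Finset.univ,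
      min (a i k) (a k j) ≤ a i j := by
    intro i _ j _ k _
    rw [haeq, haeq, haeq]
    by_cases hij : (i : R) = (j : R)
    · rw [if_pos hij]
      by_cases hik : (i : R) = (k : R)
      · rw [if_pos hik]
        have hkj : (k : R) = (j : R) := hik ▸ hij
        rw [if_pos hkj]
        simp [hik]
      · rw [if_neg hik]
        have h1 : mval R ((i : R) - (k : R)) < n (i : R) :=
          hne (i : R) i.2 (k : R) k.2 hik
        have h2 : min ((mval R ((i : R) - (k : R)) : ℤ))
            (if (k : R) = (j : R) then (n (k : R) : ℤ)
              else (mval R ((k : R) - (j : R)) : ℤ)) ≤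
            (mval R ((i : R) - (k : R)) : ℤ) := min_le_left _ _
        have h3 : (mval R ((i : R) - (k : R)) : ℤ) < (n (i : R) : ℤ) := by exact_mod_cast h1
        omega
    · rw [if_neg hij]
      by_cases hik : (i : R) = (k : R)
      · rw [if_pos hik]
        have hkj : (k : R) ≠ (j : R) := hik ▸ hij
        rw [if_neg hkj]
        have : (k : R) - (j : R) = (i : R) - (j : R) := by rw [hik]
        rw [this]
        exact min_le_right _ _
      · rw [if_neg hik]
        by_cases hkj : (k : R) = (j : R)
        · rw [if_pos hkj]
          have : (i : R) - (k : R) = (i : R) - (j : R) := by rw [hkj]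
          rw [this]
          exact min_le_left _ _
        · rw [if_neg hkj]
          have h1 : min (mval R ((i : R) - (k : R))) (mval R ((k : R) - (j : R))) ≤
              mval R ((i : R) - (j : R)) := by
            have heq : (i : R) - (k : R) + ((k : R) - (j : R)) = (i : R) - (j : R) := by ring
            have := st18_min_mval_le (sub_ne_zero.mpr hik) (sub_ne_zero.mpr hkj)
              (heq ▸ sub_ne_zero.mpr hij)
            rwa [heq] at this
          exact_mod_cast h1
  have hq := st18_quadform_pos (Fintype.card {x // x ∈ T}) a Finset.univ (le_of_eq Finset.card_univ)
    hsym hnn hdiag hstrict hultra v ⟨iw, Finset.mem_univ iw, hiw⟩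
  have hzero : ∑ i ∈ (Finset.univ : Finset {x // x ∈ T}), ∑ j ∈ (Finset.univ : Finset {x // x ∈ T}),
      a i j * (v i * v j) = 0 := by
    have h1 : ∀ i : {x // x ∈ T}, ∑ j ∈ (Finset.univ : Finset {x // x ∈ T}), a i j * (v i * v j)
        = v i * (partitionMatrix R T n).mulVec v i := by
      intro i
      simp only [Matrix.mulVec, dotProduct, Finset.mul_sum]
      apply Finset.sum_congr rfl
      intro j _
      simp only [ha]
      ring
    rw [Finset.sum_congr rfl (fun i _ => h1 i), hvA]
    simp
  rw [hzero] at hq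
  exact lt_irrefl 0 hq
end
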